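/- Let Y⁰, Y¹ : Ω → {0,1} be random variables with Y⁰(ω) ≤ Y¹(ω) for all ω (monotonicity), and let X : Ω → {0,1}^p and Y : Ω → {0,1} be random variables. Fix a, b ∈ {0,1}^p with P(X = a) > 0 and P(X = b) > 0. Assume consistency: Y(ω) = Y¹(ω) for every ω ∈ {X = b} and Y(ω) = Y⁰(ω) for every ω ∈ {X = a}; and no confounding: the pair (Y⁰, Y¹) is independent of X. Then P(Y⁰ = 0, Y¹ = 1) = Pr(Y = 1 | X = b) − Pr(Y = 1 | X = a). -/
import Mathlib


open MeasureTheory ProbabilityTheory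

/-- Conditional probability `Pr(A | B) = P(A ∩ B) / P(B)` as a real number. -/
noncomputable def condProb {Ω : Type*} [MeasurableSpace Ω] (μ : Measure Ω) (A B : Set Ω) : ℝ :=
  (μ (A ∩ B)).toReal / (μ B).toReal

/-- identification step in the proof of Theorem 1: under monotonicity
`Y⁰ ≤ Y¹`, consistency, and no confounding (`(Y⁰, Y¹)` independent of `X`),
`P(Y⁰ = 0, Y¹ = 1) = Pr(Y = 1 | X = b) − Pr(Y = 1 | X = a)`. -/
theorem stmt14 {Ω : Type*} [MeasurableSpace Ω] (μ : Measure Ω) [IsProbabilityMeasure μ]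
    {p : ℕ} (Y0 Y1 : Ω → Bool) (hmono : ∀ ω, Y0 ω ≤ Y1 ω)
    (X : Ω → Fin p → Bool) (Y : Ω → Bool)
    (hY0meas : Measurable Y0) (hY1meas : Measurable Y1)
    (hXmeas : Measurable X) (hYmeas : Measurable Y)
    (a b : Fin p → Bool)
    (ha : 0 < μ {ω | X ω = a}) (hb : 0 < μ {ω | X ω = b})
    (hconsb : ∀ ω, X ω = b → Y ω = Y1 ω)
    (hconsa : ∀ ω, X ω = a → Y ω = Y0 ω)
    (hindep : IndepFun (fun ω => (Y0 ω, Y1 ω)) X μ) :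
    (μ {ω | Y0 ω = false ∧ Y1 ω = true}).toReal =
      condProb μ {ω | Y ω = true} {ω | X ω = b} -
        condProb μ {ω | Y ω = true} {ω | X ω = a} := by
  have hindep1 : IndepFun Y1 X μ := hindep.comp measurable_snd measurable_id
  have hindep0 : IndepFun Y0 X μ := hindep.comp measurable_fst measurable_id
  have hXb : MeasurableSet {ω | X ω = b} := hXmeas (measurableSet_singleton b)
  have hXa : MeasurableSet {ω | X ω = a} := hXmeas (measurableSet_singleton a)
  have hbne : (μ {ω | X ω = b}).toReal ≠ 0 := by
    have := hb.ne'
    simp [ENNReal.toReal_ne_zero, this, measure_ne_top]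
  have hane : (μ {ω | X ω = a}).toReal ≠ 0 := by
    have := ha.ne'
    simp [ENNReal.toReal_ne_zero, this, measure_ne_top]
  -- replace Y by Y1 / Y0 on the conditioning events
  have hsetb : {ω | Y ω = true} ∩ {ω | X ω = b} = {ω | Y1 ω = true} ∩ {ω | X ω = b} := by
    ext ω; simp only [Set.mem_inter_iff, Set.mem_setOf_eq]
    constructor
    · rintro ⟨h1, h2⟩; exact ⟨(hconsb ω h2) ▸ h1, h2⟩
    · rintro ⟨h1, h2⟩; exact ⟨(hconsb ω h2).symm ▸ h1, h2⟩
  have hseta : {ω | Y ω = true} ∩ {ω | X ω = a} = {ω | Y0 ω = true} ∩ {ω | X ω = a} := by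
    ext ω; simp only [Set.mem_inter_iff, Set.mem_setOf_eq]
    constructor
    · rintro ⟨h1, h2⟩; exact ⟨(hconsa ω h2) ▸ h1, h2⟩
    · rintro ⟨h1, h2⟩; exact ⟨(hconsa ω h2).symm ▸ h1, h2⟩
  have hmulb : μ ({ω | Y1 ω = true} ∩ {ω | X ω = b}) =
      μ {ω | Y1 ω = true} * μ {ω | X ω = b} :=
    hindep1.measure_inter_preimage_eq_mul {true} {b}
      (measurableSet_singleton true) (measurableSet_singleton b)
  have hmula : μ ({ω | Y0 ω = true} ∩ {ω | X ω = a}) =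
      μ {ω | Y0 ω = true} * μ {ω | X ω = a} :=
    hindep0.measure_inter_preimage_eq_mul {true} {a}
      (measurableSet_singleton true) (measurableSet_singleton a)
  have hcb : condProb μ {ω | Y ω = true} {ω | X ω = b} = (μ {ω | Y1 ω = true}).toReal := by
    rw [condProb, hsetb, hmulb, ENNReal.toReal_mul, mul_div_assoc, div_self hbne, mul_one]
  have hca : condProb μ {ω | Y ω = true} {ω | X ω = a} = (μ {ω | Y0 ω = true}).toReal := by
    rw [condProb, hseta, hmula, ENNReal.toReal_mul, mul_div_assoc, div_self hane, mul_one]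
  rw [hcb, hca]
  -- now show P(Y0=0, Y1=1) = P(Y1=1) - P(Y0=1)
  have hsub : {ω | Y0 ω = true} ⊆ {ω | Y1 ω = true} := by
    intro ω h
    simp only [Set.mem_setOf_eq] at *
    have := hmono ω
    rw [h] at this
    exact Bool.eq_true_of_true_le this
  have hdiff : {ω | Y0 ω = false ∧ Y1 ω = true} =
      {ω | Y1 ω = true} \ {ω | Y0 ω = true} := by
    ext ω
    simp only [Set.mem_setOf_eq, Set.mem_diff, Bool.not_eq_true]
    tauto
  rw [hdiff, measure_diff hsub (hY0meas (measurableSet_singleton true)).nullMeasurableSet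
    (measure_ne_top μ _),
    ENNReal.toReal_sub_of_le (measure_mono hsub) (measure_ne_top μ _)]
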